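/- For reals k > 2 and W > 0, define for j ≥ 0 the points N_j = W^(1/k)·(1 + 2^(−jq))^(−1/k) where q = k/(k−1). Then the derivative of u ↦ −h(W−u^k)^(1/k) at u = N_j equals h·2^j for every h > 0, and there exist constants c, C > 0 (depending only on k) such that c·2^(−jq)·W^(1/k) ≤ N_{j+1} − N_j ≤ C·2^(−jq)·W^(1/k) for all j ≥ 0. -/

import Mathlib

open Real

private lemma chord_aux {p d : ℝ} (hp0 : 0 < p) (hp1 : p < 1) (hd0 : 0 ≤ d) (hd1 : d ≤ 1) :
    1 + d * ((2:ℝ) ^ p - 1) ≤ (1 + d) ^ p := by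
  have h := (Real.concaveOn_rpow hp0.le hp1.le).2
    (show (1:ℝ) ∈ Set.Ici (0:ℝ) by norm_num) (show (2:ℝ) ∈ Set.Ici (0:ℝ) by norm_num)
    (show (0:ℝ) ≤ 1 - d by linarith) hd0 (show (1 - d) + d = 1 by ring)
  simp only [smul_eq_mul, mul_one, Real.one_rpow] at h
  rw [show (1 - d + d * 2 : ℝ) = 1 + d by ring] at h
  nlinarith [h]

set_option maxHeartbeats 1600000 in
theorem stmt_10 (k : ℝ) (hk : 2 < k) :
    (∀ W : ℝ, 0 < W → ∀ j : ℕ, ∀ h : ℝ, 0 < h →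
        deriv (fun u : ℝ => -h * (W - u ^ k) ^ (1 / k))
            (W ^ (1 / k) * (1 + (2 : ℝ) ^ (-(j : ℝ) * (k / (k - 1)))) ^ (-(1 / k))) =
          h * 2 ^ j) ∧
      ∃ c C : ℝ, 0 < c ∧ 0 < C ∧ ∀ W : ℝ, 0 < W → ∀ j : ℕ,
        c * (2 : ℝ) ^ (-(j : ℝ) * (k / (k - 1))) * W ^ (1 / k) ≤
            W ^ (1 / k) * (1 + (2 : ℝ) ^ (-((j : ℝ) + 1) * (k / (k - 1)))) ^ (-(1 / k)) -
              W ^ (1 / k) * (1 + (2 : ℝ) ^ (-(j : ℝ) * (k / (k - 1)))) ^ (-(1 / k)) ∧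
          W ^ (1 / k) * (1 + (2 : ℝ) ^ (-((j : ℝ) + 1) * (k / (k - 1)))) ^ (-(1 / k)) -
              W ^ (1 / k) * (1 + (2 : ℝ) ^ (-(j : ℝ) * (k / (k - 1)))) ^ (-(1 / k)) ≤
            C * (2 : ℝ) ^ (-(j : ℝ) * (k / (k - 1))) * W ^ (1 / k) := by
  have hk0 : (0:ℝ) < k := by linarith
  have hk1 : (0:ℝ) < k - 1 := by linarith
  have hq0 : 0 < k / (k - 1) := div_pos hk0 hk1
  have hik0 : 0 < 1 / k := by positivity
  have hik1 : 1 / k < 1 := by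
    rw [div_lt_one hk0]; linarith
  constructor
  · -- derivative part
    intro W hW j h hh
    set q : ℝ := k / (k - 1) with hq
    set t : ℝ := (2:ℝ) ^ (-(j : ℝ) * q) with htdef
    have ht0 : 0 < t := rpow_pos_of_pos two_pos _
    have h1t : 0 < 1 + t := by linarith
    set N : ℝ := W ^ (1 / k) * (1 + t) ^ (-(1 / k)) with hNdef
    have hN0 : 0 < N := mul_pos (rpow_pos_of_pos hW _) (rpow_pos_of_pos h1t _)
    have hNk : N ^ k = W / (1 + t) := by
      rw [hNdef, Real.mul_rpow (rpow_pos_of_pos hW _).le (rpow_pos_of_pos h1t _).le,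
        ← Real.rpow_mul hW.le, ← Real.rpow_mul h1t.le]
      rw [show 1/k*k = (1:ℝ) by field_simp, show -(1/k)*k = (-1:ℝ) by field_simp,
        Real.rpow_one, Real.rpow_neg_one, div_eq_mul_inv]
    have hWN : W - N ^ k = W * t / (1 + t) := by
      rw [hNk]; field_simp; ring
    have hWN0 : 0 < W - N ^ k := by
      rw [hWN]; positivity
    have d1 : HasDerivAt (fun u : ℝ => u ^ k) (k * N ^ (k - 1)) N :=
      Real.hasDerivAt_rpow_const (Or.inl hN0.ne')
    have d2 : HasDerivAt (fun u : ℝ => W - u ^ k) (-(k * N ^ (k - 1))) N := by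
      have := (hasDerivAt_const N W).sub d1; rw [zero_sub] at this; exact this
    have d3 : HasDerivAt (fun y : ℝ => y ^ (1 / k))
        ((1 / k) * (W - N ^ k) ^ (1 / k - 1)) (W - N ^ k) :=
      Real.hasDerivAt_rpow_const (Or.inl hWN0.ne')
    have d4 : HasDerivAt (fun u : ℝ => (W - u ^ k) ^ (1 / k))
        ((1 / k) * (W - N ^ k) ^ (1 / k - 1) * -(k * N ^ (k - 1))) N := by
        have := HasDerivAt.comp (h := fun u : ℝ => W - u ^ k) N d3 d2; exact this
    have d5 : HasDerivAt (fun u : ℝ => -h * (W - u ^ k) ^ (1 / k))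
        (-h * ((1 / k) * (W - N ^ k) ^ (1 / k - 1) * -(k * N ^ (k - 1)))) N := d4.const_mul (-h)
    rw [d5.deriv]
    have key : N ^ (k - 1) * (W - N ^ k) ^ (1 / k - 1) = 2 ^ (j : ℝ) := by
      have e1 : N ^ (k - 1) = W ^ ((k - 1) / k) * (1 + t) ^ (-((k - 1) / k)) := by
        rw [hNdef, Real.mul_rpow (rpow_pos_of_pos hW _).le (rpow_pos_of_pos h1t _).le,
          ← Real.rpow_mul hW.le, ← Real.rpow_mul h1t.le]
        rw [show 1/k*(k-1) = (k-1)/k by ring, show -(1/k)*(k-1) = -((k-1)/k) by ring]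
      have e2 : (W - N ^ k) ^ (1 / k - 1)
          = W ^ (1 / k - 1) * t ^ (1 / k - 1) * (1 + t) ^ (-(1 / k - 1)) := by
        rw [hWN, Real.div_rpow (by positivity) h1t.le,
          Real.mul_rpow hW.le ht0.le, Real.rpow_neg h1t.le, div_eq_mul_inv]
      rw [e1, e2]
      have e3 : W ^ ((k - 1) / k) * (1 + t) ^ (-((k - 1) / k)) *
          (W ^ (1 / k - 1) * t ^ (1 / k - 1) * (1 + t) ^ (-(1 / k - 1)))
          = (W ^ ((k - 1) / k) * W ^ (1 / k - 1)) *
            ((1 + t) ^ (-((k - 1) / k)) * (1 + t) ^ (-(1 / k - 1))) * t ^ (1 / k - 1) := by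
        ring
      rw [e3, ← Real.rpow_add hW, ← Real.rpow_add h1t]
      rw [show (k - 1) / k + (1 / k - 1) = 0 by field_simp; ring,
        show -((k - 1) / k) + -(1 / k - 1) = 0 by field_simp; ring]
      rw [Real.rpow_zero, Real.rpow_zero, one_mul, one_mul]
      rw [htdef, ← Real.rpow_mul (by norm_num : (0:ℝ) ≤ 2)]
      congr 1
      rw [hq]
      field_simp
      ring
    have hk' : (1 / k) * k = 1 := by field_simp
    calc -h * ((1 / k) * (W - N ^ k) ^ (1 / k - 1) * -(k * N ^ (k - 1)))
        = h * ((1 / k) * k) * (N ^ (k - 1) * (W - N ^ k) ^ (1 / k - 1)) := by ring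
      _ = h * 2 ^ j := by rw [hk', key, Real.rpow_natCast, mul_one]
  · -- spacing part
    set q : ℝ := k / (k - 1) with hq
    set s : ℝ := (2:ℝ) ^ (-q) with hsdef
    have hs0 : 0 < s := rpow_pos_of_pos two_pos _
    have hs1 : s < 1 := rpow_lt_one_of_one_lt_of_neg one_lt_two (by linarith)
    have h2p1 : 1 < (2:ℝ) ^ (1 / k) :=
      Real.one_lt_rpow_iff_of_pos two_pos |>.2 (Or.inl ⟨one_lt_two, hik0⟩)
    refine ⟨((2:ℝ) ^ (1 / k) - 1) * (1 - s) / 4, (1 - s) / k, by nlinarith [mul_pos (sub_pos.2 h2p1) (sub_pos.2 hs1)],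
      div_pos (by linarith) hk0, fun W hW j => ?_⟩
    set t : ℝ := (2:ℝ) ^ (-(j : ℝ) * q) with htdef
    have ht0 : 0 < t := rpow_pos_of_pos two_pos _
    have ht1 : t ≤ 1 :=
      rpow_le_one_of_one_le_of_nonpos one_le_two
        (by
          have : (0:ℝ) ≤ (j : ℝ) := Nat.cast_nonneg j
          nlinarith)
    have hts : (2:ℝ) ^ (-((j : ℝ) + 1) * q) = t * s := by
      rw [htdef, hsdef, ← Real.rpow_add two_pos]
      congr 1; ring
    rw [hts]
    have h1t : 0 < 1 + t := by linarith
    have h1ts : 0 < 1 + t * s := by nlinarith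
    set A : ℝ := (1 + t * s) ^ (-(1 / k)) with hAdef
    set B : ℝ := (1 + t) ^ (-(1 / k)) with hBdef
    set d : ℝ := (t - t * s) / (1 + t * s) with hddef
    have hd0 : 0 ≤ d := by
      apply div_nonneg _ h1ts.le; nlinarith
    have hd1 : d ≤ 1 := by
      rw [div_le_one h1ts]; nlinarith
    have hts1 : t * s ≤ 1 := by nlinarith
    have hdlow : (1 - s) * t / 2 ≤ d := by
      rw [hddef, le_div_iff₀ h1ts]
      nlinarith [mul_nonneg (mul_nonneg (sub_nonneg.2 hs1.le) ht0.le) (sub_nonneg.2 hts1)]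
    have hdhigh : d ≤ (1 - s) * t := by
      rw [hddef, div_le_iff₀ h1ts]
      nlinarith [mul_nonneg (mul_nonneg (sub_nonneg.2 hs1.le) ht0.le) (mul_nonneg ht0.le hs0.le)]
    have h1d : (1:ℝ) + d = (1 + t) / (1 + t * s) := by
      rw [hddef]; field_simp; ring
    have hAB : A - B = B * ((1 + d) ^ (1 / k) - 1) := by
      rw [mul_sub, mul_one, h1d, Real.div_rpow h1t.le h1ts.le]
      congr 1
      rw [hBdef, hAdef, Real.rpow_neg h1t.le, Real.rpow_neg h1ts.le]
      field_simp
    have hBlow : (1:ℝ) / 2 ≤ B := by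
      have h1 : (2:ℝ) ^ (-(1:ℝ)) ≤ (2:ℝ) ^ (-(1 / k)) :=
        Real.rpow_le_rpow_of_exponent_le one_le_two (by linarith)
      have h2 : (1 + t) ^ (-(1 / k)) ≥ (2:ℝ) ^ (-(1 / k)) :=
        Real.rpow_le_rpow_of_nonpos h1t (by linarith) (by linarith)
      rw [Real.rpow_neg_one] at h1
      rw [hBdef]
      calc (1:ℝ)/2 = 2⁻¹ := by norm_num
        _ ≤ (2:ℝ) ^ (-(1/k)) := h1
        _ ≤ (1+t) ^ (-(1/k)) := h2
    have hBhigh : B ≤ 1 :=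
      rpow_le_one_of_one_le_of_nonpos (by linarith) (by linarith)
    have hB0 : 0 < B := rpow_pos_of_pos h1t _
    -- bounds on (1+d)^(1/k) - 1
    have hup : (1 + d) ^ (1 / k) - 1 ≤ (1 / k) * d := by
      have := rpow_one_add_le_one_add_mul_self (s := d) (by linarith) hik0.le hik1.le
      linarith
    have hlow : d * ((2:ℝ) ^ (1 / k) - 1) ≤ (1 + d) ^ (1 / k) - 1 := by
      have := chord_aux hik0 hik1 hd0 hd1
      linarith
    have hWk : 0 < W ^ (1 / k) := rpow_pos_of_pos hW _
    have hABlow : ((2:ℝ) ^ (1 / k) - 1) * (1 - s) / 4 * t ≤ A - B := by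
      rw [hAB]
      have : d * ((2:ℝ) ^ (1 / k) - 1) / 2 ≤ B * ((1 + d) ^ (1 / k) - 1) := by
        have h0 : 0 ≤ (1 + d) ^ (1 / k) - 1 := le_trans (by nlinarith) hlow
        nlinarith
      nlinarith
    have hABhigh : A - B ≤ (1 - s) / k * t := by
      rw [hAB]
      have h0' : 0 ≤ (1 + d) ^ (1 / k) - 1 :=
        le_trans (by nlinarith [mul_nonneg hd0 (le_of_lt (sub_pos.2 h2p1))]) hlow
      have h0 : (1 + d) ^ (1 / k) - 1 ≤ (1 - s) / k * t := by
        have h1 : (1 / k) * d ≤ (1 / k) * ((1 - s) * t) :=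
          mul_le_mul_of_nonneg_left hdhigh hik0.le
        have h2 : (1 / k) * ((1 - s) * t) = (1 - s) / k * t := by ring
        linarith
      calc B * ((1 + d) ^ (1 / k) - 1) ≤ (1 + d) ^ (1 / k) - 1 :=
            mul_le_of_le_one_left h0' hBhigh
        _ ≤ (1 - s) / k * t := h0
    constructor
    · calc ((2:ℝ) ^ (1 / k) - 1) * (1 - s) / 4 * t * W ^ (1 / k)
          = W ^ (1 / k) * (((2:ℝ) ^ (1 / k) - 1) * (1 - s) / 4 * t) := by ring
        _ ≤ W ^ (1 / k) * (A - B) := mul_le_mul_of_nonneg_left hABlow hWk.le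
        _ = W ^ (1 / k) * A - W ^ (1 / k) * B := by ring
    · calc W ^ (1 / k) * A - W ^ (1 / k) * B = W ^ (1 / k) * (A - B) := by ring
        _ ≤ W ^ (1 / k) * ((1 - s) / k * t) := mul_le_mul_of_nonneg_left hABhigh hWk.le
        _ = (1 - s) / k * t * W ^ (1 / k) := by ring
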